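/- arXiv:2602.00517 — 2 statements merged into one kernel-verified Lean document; each statement's English description precedes it below -/
import Mathlib

section
/- Let B, J, J' ∈ ℝ^{n×n} with ‖I − BJ‖ ≤ t, ‖B‖ ≤ β, and ‖J' − J‖ ≤ s. Define B' := B + B(2I − J'B)(I − J'B). Then ‖I − B'J'‖ ≤ (t + β·s)³. -/
open Matrix
open scoped Matrix.Norms.L2Operator

theorem stmt_15 {n : ℕ} (B J J' B' : Matrix (Fin n) (Fin n) ℝ) (t β s : ℝ)
    (h1 : ‖1 - B * J‖ ≤ t) (h2 : ‖B‖ ≤ β) (h3 : ‖J' - J‖ ≤ s)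
    (hB' : B' = B + B * (2 - J' * B) * (1 - J' * B)) :
    ‖1 - B' * J'‖ ≤ (t + β * s) ^ 3 := by
  have key : 1 - B' * J' = (1 - B * J') ^ 3 := by subst hB'; noncomm_ring
  have hsplit : 1 - B * J' = (1 - B * J) + B * (J - J') := by noncomm_ring
  have hb : ‖1 - B * J'‖ ≤ t + β * s := by
    rw [hsplit]
    calc ‖(1 - B * J) + B * (J - J')‖ ≤ ‖1 - B * J‖ + ‖B * (J - J')‖ := norm_add_le _ _
      _ ≤ ‖1 - B * J‖ + ‖B‖ * ‖J - J'‖ := by gcongr; exact norm_mul_le _ _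
      _ ≤ t + β * s := by
          have : ‖J - J'‖ = ‖J' - J‖ := by rw [← norm_neg]; congr 1; abel
          rw [this]
          have hβ : 0 ≤ β := (norm_nonneg _).trans h2
          have hs : 0 ≤ s := (norm_nonneg _).trans h3
          nlinarith [norm_nonneg (J' - J), norm_nonneg B]
  rw [key]
  calc ‖(1 - B * J') ^ 3‖ ≤ ‖1 - B * J'‖ ^ 3 := norm_pow_le' _ (by norm_num)
    _ ≤ (t + β * s) ^ 3 := by gcongr
end

section
/- Let U* be an m×m orthogonal matrix, Σ* = diag(σ₁*, ..., σ_n*) ∈ ℝ^{m×n} (zeros below row n), V* an n×n orthogonal matrix, and U = U*(I + X), V = V*(I + Y), with A ∈ ℝ^{m×n} satisfying (U*)ᵀ A V* = Σ*. Then the i-th diagonal entry (1 ≤ i ≤ n) satisfies uᵢᵀ A vᵢ − (σᵢ*/2)(uᵢᵀuᵢ + vᵢᵀvᵢ) = [XᵀΣ*Y − (XᵀXΣ* + Σ*YᵀY)/2]_{ii}, where uᵢ, vᵢ are the i-th columns of U and V. Consequently |uᵢᵀ A vᵢ − (σᵢ*/2)(uᵢᵀuᵢ + vᵢᵀvᵢ)|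 ≤ 2‖Σ*‖·max{‖X‖², ‖Y‖²}. -/
open Matrix
open scoped Matrix.Norms.L2Operator

lemma entry_abs_le_l2_opNorm {a b : ℕ} (M : Matrix (Fin a) (Fin b) ℝ) (i : Fin a) (j : Fin b) :
    |M i j| ≤ ‖M‖ := by
  classical
  have h := M.l2_opNorm_mulVec (EuclideanSpace.single j 1)
  rw [EuclideanSpace.norm_single, norm_one, mul_one] at h
  set v : EuclideanSpace ℝ (Fin a) :=
    (EuclideanSpace.equiv (Fin a) ℝ).symm (M *ᵥ (EuclideanSpace.single j 1)) with hvdef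
  have hv : v i = M i j := by
    show (M *ᵥ (EuclideanSpace.single j 1 : EuclideanSpace ℝ (Fin b))) i = M i j
    have he : (EuclideanSpace.single j 1 : EuclideanSpace ℝ (Fin b)) = (Pi.single j 1 : Fin b → ℝ) := by
      ext k; simp [EuclideanSpace.single_apply, Pi.single_apply, eq_comm]
    rw [he, mulVec_single]
    simp
  have h2 : |v i| ≤ ‖v‖ := by
    have hi := EuclideanSpace.inner_single_left i (1 : ℝ) v
    calc |v i| = |(inner ℝ (EuclideanSpace.single i (1:ℝ)) v : ℝ)| := by rw [hi]; simp
      _ ≤ ‖(EuclideanSpace.single i (1:ℝ))‖ * ‖v‖ := abs_real_inner_le_norm _ _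
      _ = ‖v‖ := by rw [EuclideanSpace.norm_single, norm_one, one_mul]
  rw [← hv]
  exact h2.trans h

theorem stmt_18 {m n : ℕ} (hmn : n ≤ m)
    (Ustar U X : Matrix (Fin m) (Fin m) ℝ)
    (Vstar V Y : Matrix (Fin n) (Fin n) ℝ)
    (A S : Matrix (Fin m) (Fin n) ℝ) (σ : Fin n → ℝ)
    (hσ : ∀ i j : Fin n, i ≤ j → σ j ≤ σ i) (hσ0 : ∀ i, 0 ≤ σ i)
    (hS : ∀ (i : Fin m) (j : Fin n), S i j = if (i : ℕ) = (j : ℕ) then σ j else 0)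
    (hUo : Ustarᵀ * Ustar = 1) (hVo : Vstarᵀ * Vstar = 1)
    (hU : U = Ustar * (1 + X)) (hV : V = Vstar * (1 + Y))
    (hA : Ustarᵀ * A * Vstar = S) :
    ∀ i : Fin n,
      (Uᵀ * A * V) (Fin.castLE hmn i) i -
          σ i / 2 * ((Uᵀ * U) (Fin.castLE hmn i) (Fin.castLE hmn i) + (Vᵀ * V) i i) =
        (Xᵀ * S * Y - (1 / 2 : ℝ) • (Xᵀ * X * S + S * (Yᵀ * Y))) (Fin.castLE hmn i) i ∧
      |(Uᵀ * A * V) (Fin.castLE hmn i) i -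
          σ i / 2 * ((Uᵀ * U) (Fin.castLE hmn i) (Fin.castLE hmn i) + (Vᵀ * V) i i)| ≤
        2 * ‖S‖ * max (‖X‖ ^ 2) (‖Y‖ ^ 2) := by
  classical
  -- column form of S
  have hS' : ∀ (k : Fin m) (i : Fin n), S k i = if k = Fin.castLE hmn i then σ i else 0 := by
    intro k i
    rw [hS]
    congr 1
    simp [Fin.ext_iff]
  -- row form of S
  have hS'' : ∀ (i : Fin n) (k : Fin n), S (Fin.castLE hmn i) k = if k = i then σ i else 0 := by
    intro i k
    rw [hS]
    simp only [Fin.coe_castLE, Fin.val_eq_val]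
    by_cases h : k = i
    · subst h; simp
    · rw [if_neg h, if_neg (fun hh => h hh.symm)]
  have hUAV : Uᵀ * A * V = S + Xᵀ * S + S * Y + Xᵀ * S * Y := by
    subst hU hV
    have h1 : (Ustar * (1 + X))ᵀ * A * (Vstar * (1 + Y))
        = (1 + X)ᵀ * (Ustarᵀ * A * Vstar) * (1 + Y) := by
      rw [transpose_mul]
      simp only [Matrix.mul_assoc]
    rw [h1, hA, transpose_add, transpose_one]
    simp only [Matrix.add_mul, Matrix.mul_add, Matrix.one_mul, Matrix.mul_one]
    abel
  have hUU : Uᵀ * U = 1 + Xᵀ + X + Xᵀ * X := by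
    subst hU
    have h1 : (Ustar * (1 + X))ᵀ * (Ustar * (1 + X)) = (1 + X)ᵀ * (Ustarᵀ * Ustar) * (1 + X) := by
      rw [transpose_mul]
      simp only [Matrix.mul_assoc]
    rw [h1, hUo, Matrix.mul_one, transpose_add, transpose_one]
    simp only [Matrix.add_mul, Matrix.mul_add, Matrix.one_mul, Matrix.mul_one]
    abel
  have hVV : Vᵀ * V = 1 + Yᵀ + Y + Yᵀ * Y := by
    subst hV
    have h1 : (Vstar * (1 + Y))ᵀ * (Vstar * (1 + Y)) = (1 + Y)ᵀ * (Vstarᵀ * Vstar) * (1 + Y) := by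
      rw [transpose_mul]
      simp only [Matrix.mul_assoc]
    rw [h1, hVo, Matrix.mul_one, transpose_add, transpose_one]
    simp only [Matrix.add_mul, Matrix.mul_add, Matrix.one_mul, Matrix.mul_one]
    abel
  intro i
  set i' : Fin m := Fin.castLE hmn i with hi'
  -- entry computations
  have eB : ∀ B : Matrix (Fin m) (Fin m) ℝ, (B * S) i' i = B i' i' * σ i := by
    intro B
    rw [mul_apply]
    simp [hS', mul_ite, hi']
  have eC : ∀ C : Matrix (Fin n) (Fin n) ℝ, (S * C) i' i = σ i * C i i := by
    intro C
    rw [mul_apply]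
    simp [hS'', ite_mul, hi']
  have eXS : (Xᵀ * S) i' i = X i' i' * σ i := by rw [eB]; rfl
  have eSY : (S * Y) i' i = σ i * Y i i := eC Y
  have eXXS : (Xᵀ * X * S) i' i = (Xᵀ * X) i' i' * σ i := eB _
  have eSYY : (S * (Yᵀ * Y)) i' i = σ i * (Yᵀ * Y) i i := eC _
  have eS : S i' i = σ i := by rw [hS']; simp [hi']
  have key : (Uᵀ * A * V) i' i -
      σ i / 2 * ((Uᵀ * U) i' i' + (Vᵀ * V) i i) =
      (Xᵀ * S * Y - (1 / 2 : ℝ) • (Xᵀ * X * S + S * (Yᵀ * Y))) i' i := by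
    rw [hUAV, hUU, hVV]
    simp only [Matrix.add_apply, Matrix.sub_apply, Matrix.smul_apply, smul_eq_mul, one_apply_eq, transpose_apply,
      eXS, eSY, eXXS, eSYY, eS]
    ring
  refine ⟨key, ?_⟩
  rw [key]
  have habs : |(Xᵀ * S * Y - (1 / 2 : ℝ) • (Xᵀ * X * S + S * (Yᵀ * Y))) i' i| ≤
      ‖Xᵀ * S * Y - (1 / 2 : ℝ) • (Xᵀ * X * S + S * (Yᵀ * Y))‖ :=
    entry_abs_le_l2_opNorm _ _ _
  have hXt : ‖Xᵀ‖ = ‖X‖ := by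
    rw [← X.conjTranspose_eq_transpose_of_trivial]
    exact X.l2_opNorm_conjTranspose
  have hYt : ‖Yᵀ‖ = ‖Y‖ := by
    rw [← Y.conjTranspose_eq_transpose_of_trivial]
    exact Y.l2_opNorm_conjTranspose
  have hX0 : (0:ℝ) ≤ ‖X‖ := norm_nonneg _
  have hY0 : (0:ℝ) ≤ ‖Y‖ := norm_nonneg _
  have hS0 : (0:ℝ) ≤ ‖S‖ := norm_nonneg _
  set M := max (‖X‖ ^ 2) (‖Y‖ ^ 2) with hM
  have h1 : ‖Xᵀ * S * Y‖ ≤ ‖S‖ * M := by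
    calc ‖Xᵀ * S * Y‖ ≤ ‖Xᵀ * S‖ * ‖Y‖ := l2_opNorm_mul _ _
      _ ≤ ‖Xᵀ‖ * ‖S‖ * ‖Y‖ := by
          have := l2_opNorm_mul Xᵀ S
          exact mul_le_mul_of_nonneg_right this hY0
      _ = ‖S‖ * (‖X‖ * ‖Y‖) := by rw [hXt]; ring
      _ ≤ ‖S‖ * M := by
          apply mul_le_mul_of_nonneg_left _ hS0
          rcases le_total ‖X‖ ‖Y‖ with h | h
          · calc ‖X‖ * ‖Y‖ ≤ ‖Y‖ * ‖Y‖ := mul_le_mul_of_nonneg_right h hY0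
              _ = ‖Y‖ ^ 2 := (sq ‖Y‖).symm
              _ ≤ M := le_max_right _ _
          · calc ‖X‖ * ‖Y‖ ≤ ‖X‖ * ‖X‖ := mul_le_mul_of_nonneg_left h hX0
              _ = ‖X‖ ^ 2 := (sq ‖X‖).symm
              _ ≤ M := le_max_left _ _
  have h2 : ‖Xᵀ * X * S‖ ≤ ‖S‖ * M := by
    calc ‖Xᵀ * X * S‖ ≤ ‖Xᵀ * X‖ * ‖S‖ := l2_opNorm_mul _ _
      _ ≤ ‖Xᵀ‖ * ‖X‖ * ‖S‖ := mul_le_mul_of_nonneg_right (l2_opNorm_mul _ _) hS0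
      _ = ‖S‖ * ‖X‖ ^ 2 := by rw [hXt]; ring
      _ ≤ ‖S‖ * M := mul_le_mul_of_nonneg_left (le_max_left _ _) hS0
  have h3 : ‖S * (Yᵀ * Y)‖ ≤ ‖S‖ * M := by
    calc ‖S * (Yᵀ * Y)‖ ≤ ‖S‖ * ‖Yᵀ * Y‖ := l2_opNorm_mul _ _
      _ ≤ ‖S‖ * (‖Yᵀ‖ * ‖Y‖) := mul_le_mul_of_nonneg_left (l2_opNorm_mul _ _) hS0
      _ = ‖S‖ * ‖Y‖ ^ 2 := by rw [hYt]; ring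
      _ ≤ ‖S‖ * M := mul_le_mul_of_nonneg_left (le_max_right _ _) hS0
  have hnorm : ‖Xᵀ * S * Y - (1 / 2 : ℝ) • (Xᵀ * X * S + S * (Yᵀ * Y))‖ ≤ 2 * ‖S‖ * M := by
    calc ‖Xᵀ * S * Y - (1 / 2 : ℝ) • (Xᵀ * X * S + S * (Yᵀ * Y))‖
        ≤ ‖Xᵀ * S * Y‖ + ‖(1 / 2 : ℝ) • (Xᵀ * X * S + S * (Yᵀ * Y))‖ := norm_sub_le _ _
      _ = ‖Xᵀ * S * Y‖ + (1/2) * ‖Xᵀ * X * S + S * (Yᵀ * Y)‖ := by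
          rw [norm_smul]; norm_num
      _ ≤ ‖Xᵀ * S * Y‖ + (1/2) * (‖Xᵀ * X * S‖ + ‖S * (Yᵀ * Y)‖) := by
          have := norm_add_le (Xᵀ * X * S) (S * (Yᵀ * Y))
          linarith
      _ ≤ ‖S‖ * M + (1/2) * (‖S‖ * M + ‖S‖ * M) := by linarith
      _ = 2 * ‖S‖ * M := by ring
  exact habs.trans hnorm
end
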